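/- Let T > 0, m₀ ∈ ℝ, L_m ∈ (0,1), let b : ℝ × ℝ × [0,T] → ℝ be continuous and satisfy |b(m,y,t) − b(m',y,t)| ≤ L_m|m − m'| for all m, m', y, t, let l : [0,T] → ℝ be continuous, and let x : [0,T] → ℝ be continuous. Then the map on C([0,T]) sending w to the path t ↦ x(t) − sup_{0≤s≤t}(x(s) − b(M(w)(s), l(s), s))⁺ is an L_m-Lipschitz map in the supremum norm, and consequently there exists a unique continuous w : [0,T] → ℝ such that w(t) = x(t) − sup_{0≤s≤t}(x(s) − b(M(w)(s), l(s), s))⁺ for every t ∈ [0,T]. -/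

import Mathlib

open Set

namespace SkAux

variable {T : ℝ}

lemma bddAbove_img (f : C(Icc (0:ℝ) T, ℝ)) (S : Set (Icc (0:ℝ) T)) :
    BddAbove (f '' S) :=
  ((isCompact_range f.continuous).bddAbove).mono (image_subset_range f S)

lemma bddBelow_img (f : C(Icc (0:ℝ) T, ℝ)) (S : Set (Icc (0:ℝ) T)) :
    BddBelow (f '' S) :=
  ((isCompact_range f.continuous).bddBelow).mono (image_subset_range f S)

lemma Iic_nonempty (hT : 0 ≤ T) (t : Icc (0:ℝ) T) : (Iic t).Nonempty :=
  ⟨⟨0, le_refl 0, hT⟩, t.2.1⟩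

lemma runSup_mono (f : C(Icc (0:ℝ) T, ℝ)) :
    Monotone fun t : Icc (0:ℝ) T => sSup (f '' Iic t) := fun a b hab =>
  csSup_le_csSup (bddAbove_img f _) ⟨f a, ⟨a, Set.mem_Iic.mpr le_rfl, rfl⟩⟩
    (image_mono (Iic_subset_Iic.mpr hab))

lemma runInf_anti (f : C(Icc (0:ℝ) T, ℝ)) :
    Antitone fun t : Icc (0:ℝ) T => sInf (f '' Iic t) := fun a b hab =>
  csInf_le_csInf (bddBelow_img f _) ⟨f a, ⟨a, Set.mem_Iic.mpr le_rfl, rfl⟩⟩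
    (image_mono (Iic_subset_Iic.mpr hab))

lemma continuous_runSup (hT : 0 ≤ T) (f : C(Icc (0:ℝ) T, ℝ)) :
    Continuous fun t : Icc (0:ℝ) T => sSup (f '' Iic t) := by
  rw [Metric.continuous_iff]
  intro t ε hε
  obtain ⟨δ, hδ, hδ'⟩ := Metric.uniformContinuous_iff.mp
    (CompactSpace.uniformContinuous_of_continuous f.continuous) (ε/2) (by positivity)
  refine ⟨δ, hδ, fun t' ht' => ?_⟩
  have key : ∀ a b : Icc (0:ℝ) T, a ≤ b → dist a b < δ →
      sSup (f '' Iic b) ≤ sSup (f '' Iic a) + ε/2 := by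
    intro a b hab hd
    refine csSup_le ((Iic_nonempty hT b).image f) ?_
    rintro y ⟨s, hs, rfl⟩
    rcases le_total s a with h | h
    · exact le_trans (le_csSup (bddAbove_img f _) ⟨s, Set.mem_Iic.mpr h, rfl⟩)
        (le_add_of_nonneg_right (by positivity))
    · have hsa : dist s a < δ := by
        rw [Subtype.dist_eq, Real.dist_eq, abs_of_nonneg (by exact sub_nonneg.mpr h)]
        rw [Subtype.dist_eq, Real.dist_eq, abs_of_nonpos (by exact sub_nonpos.mpr hab)] at hd
        have : (s:ℝ) ≤ b := hs
        linarith
      have := hδ' hsa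
      rw [Real.dist_eq] at this
      have h1 : f s ≤ f a + ε/2 := by
        have := abs_sub_le_iff.mp this.le
        linarith [this.1]
      exact le_trans h1 (add_le_add_left (le_csSup (bddAbove_img f _) ⟨a, Set.mem_Iic.mpr le_rfl, rfl⟩) _)
  rw [Real.dist_eq]
  rcases le_total t' t with h | h
  · have h1 := runSup_mono f h
    have h2 := key t' t h ht'
    rw [abs_of_nonpos (by simpa using sub_nonpos.mpr h1)]
    linarith
  · have h1 := runSup_mono f h
    have h2 := key t t' h (by rwa [dist_comm])
    rw [abs_of_nonneg (by simpa using sub_nonneg.mpr h1)]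
    linarith

lemma continuous_runInf (hT : 0 ≤ T) (f : C(Icc (0:ℝ) T, ℝ)) :
    Continuous fun t : Icc (0:ℝ) T => sInf (f '' Iic t) := by
  have h : ∀ t : Icc (0:ℝ) T, sInf (f '' Iic t) = -sSup ((-f) '' Iic t) := by
    intro t
    have : (⇑(-f)) '' Iic t = -(⇑f '' Iic t) := by
      have h1 : ⇑(-f) = (fun y => -y) ∘ ⇑f := rfl
      rw [h1, Set.image_comp, Set.image_neg_eq_neg]
    rw [this, csSup_neg ((Iic_nonempty hT t).image f) (bddBelow_img f _), neg_neg]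
  simp only [h]
  exact (continuous_runSup hT (-f)).neg

lemma abs_csSup_sub_csSup_le {g g' : Icc (0:ℝ) T → ℝ} {S : Set (Icc (0:ℝ) T)}
    (hS : S.Nonempty) (hg : BddAbove (g '' S)) (hg' : BddAbove (g' '' S)) {c : ℝ}
    (h : ∀ s ∈ S, |g s - g' s| ≤ c) :
    |sSup (g '' S) - sSup (g' '' S)| ≤ c := by
  rw [abs_sub_le_iff]
  constructor
  · rw [sub_le_iff_le_add]
    refine csSup_le (hS.image g) ?_
    rintro y ⟨s, hs, rfl⟩
    have := abs_sub_le_iff.mp (h s hs)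
    have h2 : g' s ≤ sSup (g' '' S) := le_csSup hg' ⟨s, hs, rfl⟩
    linarith [this.1]
  · rw [sub_le_iff_le_add]
    refine csSup_le (hS.image g') ?_
    rintro y ⟨s, hs, rfl⟩
    have := abs_sub_le_iff.mp (h s hs)
    have h2 : g s ≤ sSup (g '' S) := le_csSup hg ⟨s, hs, rfl⟩
    linarith [this.2]

lemma abs_csInf_sub_csInf_le {g g' : Icc (0:ℝ) T → ℝ} {S : Set (Icc (0:ℝ) T)}
    (hS : S.Nonempty) (hg : BddBelow (g '' S)) (hg' : BddBelow (g' '' S)) {c : ℝ}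
    (h : ∀ s ∈ S, |g s - g' s| ≤ c) :
    |sInf (g '' S) - sInf (g' '' S)| ≤ c := by
  rw [abs_sub_le_iff]
  constructor
  · have key : sInf (g '' S) - c ≤ sInf (g' '' S) := by
      refine le_csInf (hS.image g') ?_
      rintro y ⟨s, hs, rfl⟩
      have h1 := abs_sub_le_iff.mp (h s hs)
      have h2 : sInf (g '' S) ≤ g s := csInf_le hg ⟨s, hs, rfl⟩
      linarith [h1.1]
    linarith
  · have key : sInf (g' '' S) - c ≤ sInf (g '' S) := by
      refine le_csInf (hS.image g) ?_
      rintro y ⟨s, hs, rfl⟩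
      have h1 := abs_sub_le_iff.mp (h s hs)
      have h2 : sInf (g' '' S) ≤ g' s := csInf_le hg' ⟨s, hs, rfl⟩
      linarith [h1.2]
    linarith

end SkAux


/-- Running minimum of a continuous path `w` on `[0,T]`, started at level `m₀`:
`M(w)(t) = min(m₀, inf_{0 ≤ s ≤ t} w(s))`. -/
noncomputable def runMin (T m₀ : ℝ) (w : C(Set.Icc (0:ℝ) T, ℝ))
    (t : Set.Icc (0:ℝ) T) : ℝ :=
  min m₀ (sInf (w '' Set.Iic t))

/-- The Skorokhod-type map `w ↦ (t ↦ x(t) − sup_{0≤s≤t} (x(s) − b(M(w)(s), l(s), s))⁺)`. -/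
noncomputable def skMap (T m₀ : ℝ) (b : ℝ → ℝ → Set.Icc (0:ℝ) T → ℝ)
    (l x : C(Set.Icc (0:ℝ) T, ℝ)) (w : C(Set.Icc (0:ℝ) T, ℝ))
    (t : Set.Icc (0:ℝ) T) : ℝ :=
  x t - sSup ((fun s => max (x s - b (runMin T m₀ w s) (l s) s) 0) '' Set.Iic t)

/-- The fixed-point map of the Skorokhod problem with running-minimum dependent
boundary is `L_m`-Lipschitz in the supremum norm, and hence admits a unique
continuous fixed point. -/
theorem stmt0 (T m₀ Lm : ℝ) (hT : 0 < T) (hLm : Lm ∈ Set.Ioo (0:ℝ) 1)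
    (b : ℝ → ℝ → Set.Icc (0:ℝ) T → ℝ)
    (hb : Continuous fun p : ℝ × ℝ × Set.Icc (0:ℝ) T => b p.1 p.2.1 p.2.2)
    (hbLip : ∀ (m m' y : ℝ) (t : Set.Icc (0:ℝ) T),
      |b m y t - b m' y t| ≤ Lm * |m - m'|)
    (l x : C(Set.Icc (0:ℝ) T, ℝ)) :
    (∀ w w' : C(Set.Icc (0:ℝ) T, ℝ), ∀ t : Set.Icc (0:ℝ) T,
      |skMap T m₀ b l x w t - skMap T m₀ b l x w' t| ≤ Lm * ‖w - w'‖) ∧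
    (∃! w : C(Set.Icc (0:ℝ) T, ℝ), ∀ t : Set.Icc (0:ℝ) T,
      w t = skMap T m₀ b l x w t) := by
  have hT' : (0:ℝ) ≤ T := hT.le
  have hrunMin_cont : ∀ w : C(Icc (0:ℝ) T, ℝ), Continuous (runMin T m₀ w) := fun w =>
    continuous_const.min (SkAux.continuous_runInf hT' w)
  let g : C(Icc (0:ℝ) T, ℝ) → C(Icc (0:ℝ) T, ℝ) := fun w =>
    ⟨fun s => max (x s - b (runMin T m₀ w s) (l s) s) 0, by
      refine (x.continuous.sub ?_).max continuous_const
      exact hb.comp (((hrunMin_cont w)).prodMk ((l.continuous).prodMk continuous_id))⟩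
  have hsk : ∀ w t, skMap T m₀ b l x w t = x t - sSup ((g w) '' Iic t) := fun w t => rfl
  have part1 : ∀ w w' : C(Icc (0:ℝ) T, ℝ), ∀ t : Icc (0:ℝ) T,
      |skMap T m₀ b l x w t - skMap T m₀ b l x w' t| ≤ Lm * ‖w - w'‖ := by
    intro w w' t
    have hnorm : ∀ s : Icc (0:ℝ) T, |w s - w' s| ≤ ‖w - w'‖ := fun s => by
      simpa using ContinuousMap.norm_coe_le_norm (w - w') s
    have hrm : ∀ s : Icc (0:ℝ) T, |runMin T m₀ w s - runMin T m₀ w' s| ≤ ‖w - w'‖ := by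
      intro s
      have hinf : |sInf (w '' Iic s) - sInf (w' '' Iic s)| ≤ ‖w - w'‖ :=
        SkAux.abs_csInf_sub_csInf_le (SkAux.Iic_nonempty hT' s) (SkAux.bddBelow_img w _)
          (SkAux.bddBelow_img w' _) (fun s' _ => hnorm s')
      refine le_trans (abs_min_sub_min_le_max m₀ _ m₀ _) ?_
      rw [sub_self, abs_zero]
      exact max_le (norm_nonneg _) hinf
    have hg : ∀ s ∈ (Iic t : Set (Icc (0:ℝ) T)), |g w s - g w' s| ≤ Lm * ‖w - w'‖ := by
      intro s _
      have hbb : |b (runMin T m₀ w s) (l s) s - b (runMin T m₀ w' s) (l s) s| ≤ Lm * ‖w - w'‖ :=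
        (hbLip _ _ _ _).trans (mul_le_mul_of_nonneg_left (hrm s) hLm.1.le)
      refine le_trans (abs_max_sub_max_le_max _ 0 _ 0) ?_
      rw [sub_self, abs_zero]
      refine max_le ?_ (mul_nonneg hLm.1.le (norm_nonneg _))
      have heq : (x s - b (runMin T m₀ w s) (l s) s) - (x s - b (runMin T m₀ w' s) (l s) s)
          = -(b (runMin T m₀ w s) (l s) s - b (runMin T m₀ w' s) (l s) s) := by ring
      rw [heq, abs_neg]
      exact hbb
    rw [hsk, hsk]
    have heq : (x t - sSup ((g w) '' Iic t)) - (x t - sSup ((g w') '' Iic t))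
        = -(sSup ((g w) '' Iic t) - sSup ((g w') '' Iic t)) := by ring
    rw [heq, abs_neg]
    exact SkAux.abs_csSup_sub_csSup_le (SkAux.Iic_nonempty hT' t)
      (SkAux.bddAbove_img (g w) _) (SkAux.bddAbove_img (g w') _) hg
  refine ⟨part1, ?_⟩
  let F : C(Icc (0:ℝ) T, ℝ) → C(Icc (0:ℝ) T, ℝ) := fun w =>
    ⟨fun t => skMap T m₀ b l x w t, by
      have : (fun t => skMap T m₀ b l x w t)
          = fun t => x t - sSup ((g w) '' Iic t) := funext (hsk w)
      rw [this]
      exact x.continuous.sub (SkAux.continuous_runSup hT' (g w))⟩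
  have hF : LipschitzWith ⟨Lm, hLm.1.le⟩ F := by
    refine LipschitzWith.of_dist_le_mul fun w w' => ?_
    refine (ContinuousMap.dist_le (mul_nonneg hLm.1.le dist_nonneg)).mpr fun t => ?_
    have h1 : dist (F w t) (F w' t) = |skMap T m₀ b l x w t - skMap T m₀ b l x w' t| :=
      Real.dist_eq _ _
    rw [h1, dist_eq_norm]
    exact part1 w w' t
  have hc : ContractingWith ⟨Lm, hLm.1.le⟩ F := ⟨by exact_mod_cast hLm.2, hF⟩
  haveI : Nonempty C(Icc (0:ℝ) T, ℝ) := ⟨0⟩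
  refine ⟨ContractingWith.fixedPoint F hc, fun t => ?_, fun w' hw' => ?_⟩
  · conv_lhs => rw [← hc.fixedPoint_isFixedPt]
    rfl
  · exact hc.fixedPoint_unique (ContinuousMap.ext fun t => (hw' t).symm)
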